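/- For every n ∈ ℕ, the spectral radius of any real skew-symmetric n×n matrix A with all entries in [-1,1] is at most the spectral radius of the matrix D_n whose entries above the diagonal are +1 and below the diagonal are -1 (and 0 on the diagonal). -/

import Mathlib

open Matrix

/-- The spectral radius of a complex square matrix: the supremum of the absolute
values of its (complex) eigenvalues. -/
noncomputable def matrixSpectralRadius {n : ℕ} (M : Matrix (Fin n) (Fin n) ℂ) : ℝ :=
  sSup {r : ℝ | ∃ μ ∈ spectrum ℂ M, r = ‖μ‖}

/-- The skew-symmetric matrix with `+1` above the diagonal and `-1` below. -/
def Dmat (n : ℕ) : Matrix (Fin n) (Fin n) ℝ :=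
  Matrix.of fun i j => if (i : ℕ) < (j : ℕ) then 1 else if (j : ℕ) < (i : ℕ) then -1 else 0

open scoped Matrix.Norms.L2Operator

namespace Stmt5Aux

lemma sr_nonneg {n : ℕ} (M : Matrix (Fin n) (Fin n) ℂ) : 0 ≤ matrixSpectralRadius M :=
  Real.sSup_nonneg (by rintro r ⟨μ, _, rfl⟩; positivity)

lemma exists_eigenvector {n : ℕ} {M : Matrix (Fin n) (Fin n) ℂ} {μ : ℂ}
    (h : μ ∈ spectrum ℂ M) : ∃ z : Fin n → ℂ, z ≠ 0 ∧ M.mulVec z = μ • z := by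
  have h' : μ ∈ spectrum ℂ (Matrix.toLinAlgEquiv' M) := by
    rwa [AlgEquiv.spectrum_eq (Matrix.toLinAlgEquiv' : Matrix (Fin n) (Fin n) ℂ ≃ₐ[ℂ] _) M]
  have he : Module.End.HasEigenvalue (Matrix.toLinAlgEquiv' M) μ :=
    Module.End.hasEigenvalue_iff_mem_spectrum.mpr h'
  obtain ⟨z, hz⟩ := he.exists_hasEigenvector
  refine ⟨z, hz.right, ?_⟩
  have := hz.apply_eq_smul
  rwa [Matrix.toLinAlgEquiv'_apply] at this

lemma dot_expand {n : ℕ} (B : Matrix (Fin n) (Fin n) ℝ) (v : Fin n → ℂ) :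
    dotProduct (star v) ((B.map Complex.ofReal).mulVec v)
      = ∑ j, ∑ k, (B j k : ℂ) * (star (v j) * v k) := by
  simp only [dotProduct, Matrix.mulVec, Pi.star_apply, Matrix.map_apply,
    Finset.mul_sum]
  refine Finset.sum_congr rfl fun j _ => Finset.sum_congr rfl fun k _ => ?_
  ring

lemma im_star_mul_antisymm (a b : ℂ) : (star b * a).im = -(star a * b).im := by
  simp [Complex.star_def, Complex.mul_im]
  ring

lemma im_star_mul_self (a : ℂ) : (star a * a).im = 0 := by
  simp [Complex.star_def, Complex.mul_im]
  ring

/-- For a skew-Hermitian matrix, the operator norm is at most the spectral radius. -/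
lemma norm_le_spectralRadius {n : ℕ} [NeZero n] (N : Matrix (Fin n) (Fin n) ℂ)
    (hN : Nᴴ = -N) : ‖N‖ ≤ matrixSpectralRadius N := by
  letI : CStarAlgebra (Matrix (Fin n) (Fin n) ℂ) := Matrix.instCStarAlgebra
  have hsa : _root_.IsSelfAdjoint (Complex.I • N) := by
    show star (Complex.I • N) = Complex.I • N
    rw [star_smul, Matrix.star_eq_conjTranspose, hN, Complex.star_def,
      Complex.conj_I, neg_smul_neg]
  obtain ⟨ζ, hζmem, hζ⟩ := spectrum.exists_nnnorm_eq_spectralRadius (Complex.I • N)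
  have hsr := hsa.spectralRadius_eq_nnnorm
  have hueq := spectrum.unit_smul_eq_smul (R := ℂ) N (Units.mk0 Complex.I Complex.I_ne_zero)
  rw [show (Units.mk0 Complex.I Complex.I_ne_zero) • N = Complex.I • N from rfl] at hueq
  rw [hueq, Set.mem_smul_set] at hζmem
  obtain ⟨ν, hν, rfl⟩ := hζmem
  have hnn : ‖(Units.mk0 Complex.I Complex.I_ne_zero) • ν‖₊ = ‖Complex.I • N‖₊ := by
    have := hζ.trans hsr
    exact_mod_cast this
  have h1 : ‖ν‖ = ‖N‖ := by
    have := congrArg (fun x : NNReal => (x : ℝ)) hnn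
    simpa [Units.smul_def, norm_smul] using this
  have hbdd : BddAbove {r : ℝ | ∃ μ ∈ spectrum ℂ N, r = ‖μ‖} := by
    refine ⟨‖N‖, ?_⟩
    rintro r ⟨μ, hμ, rfl⟩
    simpa using spectrum.norm_le_norm_of_mem hμ
  have hmem : ‖ν‖ ∈ {r : ℝ | ∃ μ ∈ spectrum ℂ N, r = ‖μ‖} := ⟨ν, hν, rfl⟩
  calc ‖N‖ = ‖ν‖ := h1.symm
    _ ≤ matrixSpectralRadius N := le_csSup hbdd hmem

lemma map_conjTranspose {n : ℕ} (B : Matrix (Fin n) (Fin n) ℝ) :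
    (B.map Complex.ofReal)ᴴ = Bᵀ.map Complex.ofReal := by
  ext j k
  simp [Matrix.conjTranspose_apply, Complex.star_def, Complex.conj_ofReal]

lemma Dmat_transpose (n : ℕ) : (Dmat n)ᵀ = -(Dmat n) := by
  ext j k
  simp only [Matrix.transpose_apply, Matrix.neg_apply, Dmat, Matrix.of_apply]
  rcases lt_trichotomy (j : ℕ) (k : ℕ) with h | h | h
  · simp [h, lt_asymm h]
  · simp [h, lt_irrefl]
  · simp [h, lt_asymm h]

lemma map_neg' {n : ℕ} (B : Matrix (Fin n) (Fin n) ℝ) :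
    (-B).map Complex.ofReal = -(B.map Complex.ofReal) := by
  ext j k; simp

end Stmt5Aux

open Stmt5Aux in
theorem stmt_5 (n : ℕ) (A : Matrix (Fin n) (Fin n) ℝ)
    (hskew : Aᵀ = -A) (hbound : ∀ i j, |A i j| ≤ 1) :
    matrixSpectralRadius (A.map Complex.ofReal) ≤
      matrixSpectralRadius ((Dmat n).map Complex.ofReal) := by
  unfold matrixSpectralRadius
  refine Real.sSup_le ?_ (sr_nonneg _)
  rintro r ⟨μ, hμ, rfl⟩
  obtain ⟨z, hz0, hzeig⟩ := exists_eigenvector hμ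
  obtain ⟨j0, hj0⟩ : ∃ j, z j ≠ 0 := by
    by_contra h; push_neg at h; exact hz0 (funext h)
  have : NeZero n := ⟨fun h => Fin.elim0 (h ▸ j0)⟩
  set T : ℝ := ∑ j, ‖z j‖ ^ 2 with hT
  have hTpos : 0 < T := by
    have h0 : 0 < ‖z j0‖ := norm_pos_iff.mpr hj0
    have h1 : 0 < ‖z j0‖ ^ 2 := by positivity
    have h2 : ‖z j0‖ ^ 2 ≤ ∑ j, ‖z j‖ ^ 2 :=
      Finset.single_le_sum (f := fun j => ‖z j‖ ^ 2)
        (fun i _ => by positivity) (Finset.mem_univ j0)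
    rw [hT]
    linarith
  set N : Matrix (Fin n) (Fin n) ℂ := (Dmat n).map Complex.ofReal with hNdef
  have hNskew : Nᴴ = -N := by
    rw [hNdef, map_conjTranspose, Dmat_transpose, map_neg']
  -- Step 1: the quadratic form
  have hS : (∑ j, ∑ k, (A j k : ℂ) * (star (z j) * z k)) = μ * (T : ℂ) := by
    rw [← dot_expand, hzeig]
    have hzz : dotProduct (star z) z = (T : ℂ) := by
      simp only [dotProduct, Pi.star_apply, hT]
      push_cast
      refine Finset.sum_congr rfl fun j _ => ?_
      rw [Complex.star_def, mul_comm, Complex.mul_conj, ← Complex.sq_norm]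
      push_cast
      ring
    rw [dotProduct_smul, hzz, smul_eq_mul]
  -- skewness of A entrywise
  have hAT : ∀ j k, A k j = -A j k := fun j k => by
    have := congrFun (congrFun hskew j) k
    simpa using this
  -- Step 2: real part vanishes
  have hre : (∑ j, ∑ k, (A j k : ℂ) * (star (z j) * z k)).re = 0 := by
    have hexp : (∑ j, ∑ k, (A j k : ℂ) * (star (z j) * z k)).re
        = ∑ j, ∑ k, A j k * (star (z j) * z k).re := by
      rw [Complex.re_sum]
      refine Finset.sum_congr rfl fun j _ => ?_
      rw [Complex.re_sum]
      exact Finset.sum_congr rfl fun k _ => Complex.re_ofReal_mul _ _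
    rw [hexp]
    have hgre : ∀ j k : Fin n, (star (z k) * z j).re = (star (z j) * z k).re := by
      intro j k
      simp [Complex.star_def, Complex.mul_re]
      ring
    have h1 : ∑ j, ∑ k, A j k * (star (z j) * z k).re
        = ∑ j, ∑ k, A k j * (star (z k) * z j).re := Finset.sum_comm
    have h2 : ∑ j, ∑ k, A k j * (star (z k) * z j).re
        = -∑ j, ∑ k, A j k * (star (z j) * z k).re := by
      rw [← Finset.sum_neg_distrib]
      refine Finset.sum_congr rfl fun j _ => ?_
      rw [← Finset.sum_neg_distrib]
      refine Finset.sum_congr rfl fun k _ => ?_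
      rw [hAT j k, hgre j k]
      ring
    linarith [h1.trans h2]
  -- Step 3: imaginary part bound
  have him_bound : |(∑ j, ∑ k, (A j k : ℂ) * (star (z j) * z k)).im|
      ≤ ∑ j, ∑ k, |(star (z j) * z k).im| := by
    rw [Complex.im_sum]
    refine (Finset.abs_sum_le_sum_abs _ _).trans (Finset.sum_le_sum fun j _ => ?_)
    rw [Complex.im_sum]
    refine (Finset.abs_sum_le_sum_abs _ _).trans (Finset.sum_le_sum fun k _ => ?_)
    rw [Complex.im_ofReal_mul, abs_mul]
    exact mul_le_of_le_one_left (abs_nonneg _) (hbound j k)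
  -- Step 4: geometry — angles in [0, π]
  set θ : Fin n → ℝ := fun j =>
    if Complex.arg (z j) < 0 then Complex.arg (z j) + Real.pi else Complex.arg (z j) with hθdef
  have hθ0 : ∀ j, 0 ≤ θ j := by
    intro j
    simp only [hθdef]
    split_ifs with h
    · linarith [Complex.neg_pi_lt_arg (z j)]
    · linarith
  have hθpi : ∀ j, θ j ≤ Real.pi := by
    intro j
    simp only [hθdef]
    split_ifs with h
    · linarith
    · exact Complex.arg_le_pi _
  set u : Fin n → ℂ := fun j => (‖z j‖ : ℂ) *
      ((Real.cos (θ j) : ℂ) + (Real.sin (θ j) : ℂ) * Complex.I) with hudef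
  have hzpolar : ∀ j, (‖z j‖ : ℂ) * ((Real.cos (Complex.arg (z j)) : ℂ)
      + (Real.sin (Complex.arg (z j)) : ℂ) * Complex.I) = z j := by
    intro j
    have := Complex.norm_mul_exp_arg_mul_I (z j)
    rwa [Complex.exp_mul_I, ← Complex.ofReal_cos, ← Complex.ofReal_sin] at this
  have hu : ∀ j, u j = z j ∨ u j = -z j := by
    intro j
    by_cases h : Complex.arg (z j) < 0
    · right
      have hθj : θ j = Complex.arg (z j) + Real.pi := by simp only [hθdef]; rw [if_pos h]
      rw [hudef]
      simp only
      rw [hθj, Real.cos_add_pi, Real.sin_add_pi]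
      conv_rhs => rw [← hzpolar j]
      push_cast
      ring
    · left
      have hθj : θ j = Complex.arg (z j) := by simp only [hθdef]; rw [if_neg h]
      rw [hudef]
      simp only
      rw [hθj]
      exact hzpolar j
  have habs_u : ∀ j, ‖u j‖ = ‖z j‖ := by
    intro j
    rcases hu j with h | h <;> rw [h] <;> simp
  have him_u : ∀ j k, (star (u j) * u k).im
      = ‖z j‖ * ‖z k‖ * Real.sin (θ k - θ j) := by
    intro j k
    rw [hudef]
    simp only [Real.sin_sub]
    simp [Complex.star_def, Complex.mul_im, Complex.mul_re, Complex.add_re, Complex.add_im,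
      Complex.cos_ofReal_re, Complex.sin_ofReal_re, Complex.cos_ofReal_im, Complex.sin_ofReal_im]
    ring
  have habs_im : ∀ j k, |(star (u j) * u k).im| = |(star (z j) * z k).im| := by
    intro j k
    rcases hu j with h | h <;> rcases hu k with h' | h' <;> rw [h, h']
    · rw [mul_neg, Complex.neg_im, abs_neg]
    · rw [star_neg, neg_mul, Complex.neg_im, abs_neg]
    · rw [star_neg, neg_mul, mul_neg, neg_neg]
  -- Step 5: sorting
  set σ : Equiv.Perm (Fin n) := Tuple.sort θ with hσ
  have hmono : Monotone (θ ∘ σ) := Tuple.monotone_sort θ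
  set w : Fin n → ℂ := fun j => u (σ j) with hw
  have hwsign : ∀ j k : Fin n, j ≤ k → 0 ≤ (star (w j) * w k).im := by
    intro j k hjk
    rw [hw]
    simp only
    rw [him_u]
    have h1 : θ (σ j) ≤ θ (σ k) := hmono hjk
    have h2 : 0 ≤ Real.sin (θ (σ k) - θ (σ j)) :=
      Real.sin_nonneg_of_nonneg_of_le_pi (by linarith)
        (by linarith [hθ0 (σ j), hθpi (σ k)])
    exact mul_nonneg (mul_nonneg (norm_nonneg _) (norm_nonneg _)) h2
  -- Step 6: the D-quadratic form equals the absolute sum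
  have hDim : (dotProduct (star w) (N.mulVec w)).im
      = ∑ j, ∑ k, |(star (w j) * w k).im| := by
    rw [hNdef, dot_expand, Complex.im_sum]
    refine Finset.sum_congr rfl fun j _ => ?_
    rw [Complex.im_sum]
    refine Finset.sum_congr rfl fun k _ => ?_
    rw [Complex.im_ofReal_mul]
    rcases lt_trichotomy (j : ℕ) (k : ℕ) with h | h | h
    · have hD : Dmat n j k = 1 := by simp only [Dmat, Matrix.of_apply, if_pos h]
      rw [hD, abs_of_nonneg (hwsign j k (le_of_lt (by exact_mod_cast h)))]
      ring
    · have hjk : j = k := Fin.ext h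
      subst hjk
      have hD : Dmat n j j = 0 := by simp only [Dmat, Matrix.of_apply]; rw [if_neg (lt_irrefl _), if_neg (lt_irrefl _)]
      rw [hD, im_star_mul_self]
      simp
    · have hD : Dmat n j k = -1 := by simp only [Dmat, Matrix.of_apply]; rw [if_neg (by omega), if_pos h]
      have h1 : (star (w j) * w k).im = -(star (w k) * w j).im := by
        rw [im_star_mul_antisymm]
      have h2 : 0 ≤ (star (w k) * w j).im := hwsign k j (le_of_lt (by exact_mod_cast h))
      rw [hD, h1, abs_of_nonpos (by linarith)]
      ring
  -- Step 7: reindexing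
  have hQ : ∑ j, ∑ k, |(star (w j) * w k).im| = ∑ j, ∑ k, |(star (z j) * z k).im| := by
    rw [hw]
    simp only
    calc ∑ j, ∑ k, |(star (u (σ j)) * u (σ k)).im|
        = ∑ j, ∑ k, |(star (u (σ j)) * u k).im| :=
          Finset.sum_congr rfl fun j _ =>
            Equiv.sum_comp σ (fun k => |(star (u (σ j)) * u k).im|)
      _ = ∑ j, ∑ k, |(star (u j) * u k).im| :=
          Equiv.sum_comp σ (fun j => ∑ k, |(star (u j) * u k).im|)
      _ = ∑ j, ∑ k, |(star (z j) * z k).im| :=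
          Finset.sum_congr rfl fun j _ => Finset.sum_congr rfl fun k _ => habs_im j k
  -- Step 8: Cauchy–Schwarz on the D side
  have hwT : ∑ j, ‖w j‖ ^ 2 = T := by
    rw [hw]
    simp only
    calc ∑ j, ‖u (σ j)‖ ^ 2
        = ∑ j, ‖u j‖ ^ 2 := Equiv.sum_comp σ (fun j => ‖u j‖ ^ 2)
      _ = T := by
          rw [hT]
          exact Finset.sum_congr rfl fun j _ => by rw [habs_u]
  have hCS : ‖dotProduct (star w) (N.mulVec w)‖ ≤ ‖N‖ * T := by
    set w' : EuclideanSpace ℂ (Fin n) := (WithLp.equiv 2 _).symm w with hw'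
    have h1 : dotProduct (star w) (N.mulVec w)
        = inner ℂ w' ((WithLp.equiv 2 (Fin n → ℂ)).symm (N.mulVec w)) := by
      rw [dotProduct_comm]; rfl
    have h2a : ∑ j, ‖w' j‖ ^ 2 = T := by
      rw [← hwT]
      refine Finset.sum_congr rfl fun j _ => ?_
      rw [hw']
      simp
    have h2 : ‖w'‖ = Real.sqrt T := by
      rw [EuclideanSpace.norm_eq, h2a]
    have h3 := Matrix.l2_opNorm_mulVec N w'
    calc ‖dotProduct (star w) (N.mulVec w)‖
        = ‖(inner ℂ w' ((WithLp.equiv 2 (Fin n → ℂ)).symm (N.mulVec w)) : ℂ)‖ := by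
          rw [h1]
      _ ≤ ‖w'‖ * ‖(WithLp.equiv 2 (Fin n → ℂ)).symm (N.mulVec w)‖ := norm_inner_le_norm _ _
      _ ≤ ‖w'‖ * (‖N‖ * ‖w'‖) := by
          refine mul_le_mul_of_nonneg_left ?_ (norm_nonneg _)
          exact h3
      _ = ‖N‖ * (Real.sqrt T * Real.sqrt T) := by rw [h2]; ring
      _ = ‖N‖ * T := by rw [Real.mul_self_sqrt hTpos.le]
  -- Step 9: combine everything
  have hchain : ‖μ‖ * T ≤ ‖N‖ * T := by
    have e1 : ‖μ‖ * T = ‖μ * (T : ℂ)‖ := by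
      rw [norm_mul, Complex.norm_real, Real.norm_eq_abs, abs_of_nonneg hTpos.le]
    have e2 : ‖μ * (T : ℂ)‖
        ≤ ∑ j, ∑ k, |(star (z j) * z k).im| := by
      rw [← hS]
      refine (Complex.norm_le_abs_re_add_abs_im _).trans ?_
      rw [hre]
      simpa using him_bound
    have e3 : ∑ j, ∑ k, |(star (z j) * z k).im|
        ≤ ‖dotProduct (star w) (N.mulVec w)‖ := by
      rw [← hQ, ← hDim]
      exact Complex.abs_im_le_norm _ |>.trans' (le_abs_self _)
    calc ‖μ‖ * T = ‖μ * (T : ℂ)‖ := e1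
      _ ≤ ∑ j, ∑ k, |(star (z j) * z k).im| := e2
      _ ≤ ‖dotProduct (star w) (N.mulVec w)‖ := e3
      _ ≤ ‖N‖ * T := hCS
  have hfin : ‖μ‖ ≤ ‖N‖ := le_of_mul_le_mul_right hchain hTpos
  exact hfin.trans (norm_le_spectralRadius N hNskew)
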